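/- Let c be a null Cartan curve in Minkowski 4-space and define c̄(s) = c(s) + α(s)W₁(s) + β(s)W₂(s). If the span of {W̄₁, W̄₂} at corresponding points equals the span of {W₁, W₂}, so that W̄₁ = cos θ W₁ + sin θ W₂ and W̄₂ = -sin θ W₁ + cos θ W₂, then α and β are constant functions. -/

import Mathlib

noncomputable section

/-- Minkowski inner product on ℝ⁴ with signature (-,+,+,+). -/
def mink (x y : Fin 4 → ℝ) : ℝ := -(x 0 * y 0) + x 1 * y 1 + x 2 * y 2 + x 3 * y 3

lemma mink_add_left (x y z : Fin 4 → ℝ) : mink (x + y) z = mink x z + mink y z := by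
  simp [mink]; ring

lemma mink_sub_left (x y z : Fin 4 → ℝ) : mink (x - y) z = mink x z - mink y z := by
  simp [mink]; ring

lemma mink_smul_left (r : ℝ) (x z : Fin 4 → ℝ) : mink (r • x) z = r * mink x z := by
  simp [mink, Pi.smul_apply, smul_eq_mul]; ring

lemma mink_add_right (x y z : Fin 4 → ℝ) : mink x (y + z) = mink x y + mink x z := by
  simp [mink]; ring

lemma mink_smul_right (r : ℝ) (x z : Fin 4 → ℝ) : mink x (r • z) = r * mink x z := by
  simp [mink, Pi.smul_apply, smul_eq_mul]; ring

lemma mink_comm (x y : Fin 4 → ℝ) : mink x y = mink y x := by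
  simp [mink]; ring

lemma mink_zero_left (z : Fin 4 → ℝ) : mink 0 z = 0 := by simp [mink]

/-- If `c̄(φ(s)) = c(s) + α(s) W₁(s) + β(s) W₂(s)` and the plane
spanned by `{W̄₁, W̄₂}` coincides with that spanned by `{W₁, W₂}`, so that
`W̄₁ = cos θ W₁ + sin θ W₂` and `W̄₂ = -sin θ W₁ + cos θ W₂`, then `α` and `β`
are constant functions. -/
theorem stmt5 (c c' L N W₁ W₂ L' W₁' W₂' : ℝ → (Fin 4 → ℝ)) (k₁ k₂ : ℝ → ℝ)
    (α β θ φ : ℝ → ℝ)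
    (hα : Differentiable ℝ α) (hβ : Differentiable ℝ β)
    (hW₁d : Differentiable ℝ W₁) (hW₂d : Differentiable ℝ W₂)
    (hφreg : ∀ s, deriv φ s ≠ 0)
    -- Cartan–Frenet equations of c:
    (hcL : ∀ s, deriv c s = L s)
    (hLfr : ∀ s, deriv L s = W₁ s)
    (hNfr : ∀ s, deriv N s = k₁ s • W₁ s + k₂ s • W₂ s)
    (hW₁fr : ∀ s, deriv W₁ s = -(k₁ s) • L s - N s)
    (hW₂fr : ∀ s, deriv W₂ s = -(k₂ s) • L s)
    -- pseudo-orthonormality of the frame of c: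
    (hLL : ∀ s, mink (L s) (L s) = 0) (hNN : ∀ s, mink (N s) (N s) = 0)
    (hLN : ∀ s, mink (L s) (N s) = 1)
    (hW₁W₁ : ∀ s, mink (W₁ s) (W₁ s) = 1) (hW₂W₂ : ∀ s, mink (W₂ s) (W₂ s) = 1)
    (hW₁W₂ : ∀ s, mink (W₁ s) (W₂ s) = 0)
    (hLW₁ : ∀ s, mink (L s) (W₁ s) = 0) (hLW₂ : ∀ s, mink (L s) (W₂ s) = 0)
    (hNW₁ : ∀ s, mink (N s) (W₁ s) = 0) (hNW₂ : ∀ s, mink (N s) (W₂ s) = 0)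
    -- the mate: c̄(φ(s)) = c(s) + α(s) W₁(s) + β(s) W₂(s), with dc̄/ds = (ds̄/ds) L̄:
    (hpair : ∀ s, c' (φ s) = c s + α s • W₁ s + β s • W₂ s)
    (hmate : ∀ s, deriv (fun t => c' (φ t)) s = deriv φ s • L' (φ s))
    -- the (1,2)-normal planes coincide:
    (hW₁'rot : ∀ s, W₁' (φ s) = Real.cos (θ s) • W₁ s + Real.sin (θ s) • W₂ s)
    (hW₂'rot : ∀ s, W₂' (φ s) = -Real.sin (θ s) • W₁ s + Real.cos (θ s) • W₂ s)
    -- orthogonality of the mate frame: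
    (hL'W₁' : ∀ x, mink (L' x) (W₁' x) = 0)
    (hL'W₂' : ∀ x, mink (L' x) (W₂' x) = 0) :
    (∀ s, deriv α s = 0) ∧ (∀ s, deriv β s = 0) := by
  -- key derivative identity at each point
  have key : ∀ s, deriv α s • W₁ s + deriv β s • W₂ s
      + (L s + α s • deriv W₁ s + β s • deriv W₂ s) = deriv φ s • L' (φ s) := by
    intro s
    -- c is differentiable at s
    have hcd : DifferentiableAt ℝ c s := by
      by_contra h
      have h0 : deriv c s = 0 := deriv_zero_of_not_differentiableAt h
      have : (0 : ℝ) = 1 := by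
        have := hLN s
        rw [← hcL s, h0, mink_zero_left] at this
        exact this
      norm_num at this
    have hg1 : DifferentiableAt ℝ (fun t => α t • W₁ t) s := (hα s).smul (hW₁d s)
    have hg2 : DifferentiableAt ℝ (fun t => β t • W₂ t) s := (hβ s).smul (hW₂d s)
    have heq : (fun t => c' (φ t)) = fun t => c t + α t • W₁ t + β t • W₂ t := by
      funext t; exact hpair t
    have hm := hmate s
    rw [heq] at hm
    rw [deriv_fun_add (f := fun t => c t + α t • W₁ t) ((hcd.add hg1)) hg2, deriv_fun_add hcd hg1,
      deriv_fun_smul (hα s) (hW₁d s), deriv_fun_smul (hβ s) (hW₂d s), hcL s] at hm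
    rw [← hm]; abel
  have hrot : ∀ s, mink (L' (φ s)) (W₁ s) = 0 ∧ mink (L' (φ s)) (W₂ s) = 0 := by
    intro s
    have e1 := hL'W₁' (φ s)
    have e2 := hL'W₂' (φ s)
    rw [hW₁'rot s, mink_add_right, mink_smul_right, mink_smul_right] at e1
    rw [hW₂'rot s, mink_add_right, mink_smul_right, mink_smul_right] at e2
    have hpy := Real.sin_sq_add_cos_sq (θ s)
    constructor
    · linear_combination Real.cos (θ s) * e1 - Real.sin (θ s) * e2 -
        mink (L' (φ s)) (W₁ s) * hpy
    · linear_combination Real.sin (θ s) * e1 + Real.cos (θ s) * e2 -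
        mink (L' (φ s)) (W₂ s) * hpy
  have main : ∀ s, deriv α s = 0 ∧ deriv β s = 0 := by
    intro s
    have k := key s
    have l1 := congrArg (fun v => mink v (W₁ s)) k
    have l2 := congrArg (fun v => mink v (W₂ s)) k
    simp only [mink_add_left, mink_smul_left, mink_smul_right] at l1 l2
    rw [hW₁fr s, hW₂fr s] at l1 l2
    simp only [mink_sub_left, mink_smul_left] at l1 l2
    have m21 : mink (W₂ s) (W₁ s) = 0 := by rw [mink_comm]; exact hW₁W₂ s
    simp only [hW₁W₁, hW₂W₂, hW₁W₂, hLW₁, hLW₂, hNW₁, hNW₂, m21, (hrot s).1,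
      (hrot s).2] at l1 l2
    constructor <;> linarith [l1, l2]
  exact ⟨fun s => (main s).1, fun s => (main s).2⟩
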